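/- There exist three non-collinear points a_1, a_2, a_3 ∈ ℝ² and two distinct 2-element sets X, X^G ⊆ ℝ² such that D_m(X) = D_m(X^G) for m = 1, 2, 3; that is, with only M = 3 BSs, ghost configurations can exist. A concrete witness: a_1 = (0, 3), a_2 = (5, 0), a_3 = (0, −4), X = {(2, −2), (−2, 2)}, and X^G = {(−2, −2), (2, 2)}. -/

import Mathlib

noncomputable section

/-- The Euclidean plane ℝ². -/
abbrev Plane := EuclideanSpace ℝ (Fin 2)

/-- The range set of a BS located at `a` with respect to a target set `X`:
the set of distances from `a` to the points of `X`. -/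
def rangeSet (a : Plane) (X : Set Plane) : Set ℝ := (fun p => dist a p) '' X

/-- Helper: the point `(x, y)` of the plane. -/
def pt (x y : ℝ) : Plane := WithLp.toLp 2 ![x, y]

lemma dist_pt (x y u v : ℝ) :
    dist (pt x y) (pt u v) = Real.sqrt ((x - u)^2 + (y - v)^2) := by
  rw [EuclideanSpace.dist_eq]
  simp [pt, Fin.sum_univ_two, Real.dist_eq, sq_abs]

lemma pt_ne_of_fst {x y u v : ℝ} (h : x ≠ u) : pt x y ≠ pt u v := by
  intro he; exact h (congrArg (fun p => p 0) he)

lemma pt_ne_of_snd {x y u v : ℝ} (h : y ≠ v) : pt x y ≠ pt u v := by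
  intro he; exact h (congrArg (fun p => p 1) he)

lemma rangeSet_pair (a p q : Plane) :
    rangeSet a {p, q} = {dist a p, dist a q} := by
  simp [rangeSet, Set.image_pair]

/-- **Example 1.** With only `M = 3` BSs, ghost configurations can exist: there are three
non-collinear BS positions and two distinct two-element target sets with the same range
set at every BS. A concrete witness: `a₁ = (0,3)`, `a₂ = (5,0)`, `a₃ = (0,-4)`,
`X = {(2,-2), (-2,2)}`, `X^G = {(-2,-2), (2,2)}`. -/
theorem ghost_exists_with_three_BS :
    ∃ (a₁ a₂ a₃ : Plane) (X XG : Set Plane),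
      ¬ Collinear ℝ ({a₁, a₂, a₃} : Set Plane) ∧
      X.Finite ∧ X.ncard = 2 ∧ XG.Finite ∧ XG.ncard = 2 ∧ XG ≠ X ∧
      rangeSet a₁ XG = rangeSet a₁ X ∧
      rangeSet a₂ XG = rangeSet a₂ X ∧
      rangeSet a₃ XG = rangeSet a₃ X := by
  refine ⟨pt 0 3, pt 5 0, pt 0 (-4), {pt 2 (-2), pt (-2) 2},
    {pt (-2) (-2), pt 2 2}, ?_, ?_, ?_, ?_, ?_, ?_, ?_, ?_, ?_⟩
  · -- non-collinear
    intro h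
    rw [collinear_iff_of_mem (Set.mem_insert _ _)] at h
    obtain ⟨v, hv⟩ := h
    obtain ⟨c, hc⟩ := hv (pt 5 0) (by simp)
    obtain ⟨d, hd⟩ := hv (pt 0 (-4)) (by simp)
    have hc0 : c * v 0 = 5 := by
      have := congrArg (fun p => p 0) hc
      simpa [pt] using this.symm
    have hd0 : d * v 0 = 0 := by
      have := congrArg (fun p => p 0) hd
      simpa [pt] using this.symm
    have hd1 : d * v 1 = -7 := by
      have := congrArg (fun p => p 1) hd
      have : (0 : ℝ) - 4 = d * v 1 + 3 := by simpa [pt] using this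
      linarith
    have hdne : d ≠ 0 := by
      intro h0; rw [h0] at hd1; simp at hd1
    have hv0 : v 0 = 0 := by
      rcases mul_eq_zero.mp hd0 with h | h
      · exact absurd h hdne
      · exact h
    rw [hv0, mul_zero] at hc0
    norm_num at hc0
  · exact (Set.finite_singleton _).insert _
  · exact Set.ncard_pair (pt_ne_of_fst (by norm_num))
  · exact (Set.finite_singleton _).insert _
  · exact Set.ncard_pair (pt_ne_of_fst (by norm_num))
  · intro h
    have : pt 2 (-2) ∈ ({pt (-2) (-2), pt 2 2} : Set Plane) := by
      rw [h]; simp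
    rcases this with h' | h'
    · exact pt_ne_of_fst (by norm_num) h'
    · exact pt_ne_of_snd (by norm_num) h'
  · rw [rangeSet_pair, rangeSet_pair, dist_pt, dist_pt, dist_pt, dist_pt]
    norm_num
  · rw [rangeSet_pair, rangeSet_pair, dist_pt, dist_pt, dist_pt, dist_pt]
    norm_num [Set.pair_comm]
  · rw [rangeSet_pair, rangeSet_pair, dist_pt, dist_pt, dist_pt, dist_pt]
    norm_num
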